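/- Let π and π̃ be probability measures on ℝ^d and P a proposal transition kernel on ℝ^d such that the Metropolis–Hastings acceptance probabilities α(x, y) := min{1, (dν^⊤/dν)(x, y)} and α̃(x, y) := min{1, (dν̃^⊤/dν̃)(x, y)} are well-defined, where ν(dx dy) := P(x, dy) π(dx), ν̃(dx dy) := P(x, dy) π̃(dx), and ν^⊤, ν̃^⊤ denote the swapped measures. Let K and K̃ be the corresponding MH transition kernels targeting π and π̃ with the same proposal P. Then the average acceptance rates satisfy |ᾱ(K) − ᾱ(K̃)| ≤ 2 d_TV(π, π̃). -/

import Mathlib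

open MeasureTheory ProbabilityTheory
open scoped ENNReal NNReal

/-- The total variation distance `d_TV(μ, ν) = ½ ∫ |dμ/dη − dν/dη| dη` computed w.r.t. the
dominating measure `η = μ + ν`. -/
noncomputable def tvDist {α : Type*} [MeasurableSpace α] (μ ν : Measure α) : ℝ :=
  (1 / 2) * ∫ x, |(μ.rnDeriv (μ + ν) x).toReal - (ν.rnDeriv (μ + ν) x).toReal| ∂(μ + ν)

/-- The Metropolis–Hastings acceptance probability `α_P(x, y) := min{1, dν^⊤/dν (x, y)}`,
where `ν(dx dy) := P(x, dy) π(dx)` and `ν^⊤` is its swap. -/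
noncomputable def mhAccept {E : Type*} [MeasurableSpace E] (π : Measure E) (P : Kernel E E) :
    E × E → ℝ≥0∞ :=
  fun p => min 1 (((π ⊗ₘ P).map Prod.swap).rnDeriv (π ⊗ₘ P) p)

section Aux

variable {α β : Type*} {mα : MeasurableSpace α} {mβ : MeasurableSpace β}

lemma withDensity_compProd_eq (μ : Measure α) [SFinite μ] (κ : Kernel α β) [IsSFiniteKernel κ]
    {f : α → ℝ≥0∞} (hf : Measurable f) :
    (μ.withDensity f) ⊗ₘ κ = (μ ⊗ₘ κ).withDensity (fun p => f p.1) := by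
  ext s hs
  have hrhs : ∫⁻ p in s, f p.1 ∂(μ ⊗ₘ κ)
      = ∫⁻ x, f x * κ x (Prod.mk x ⁻¹' s) ∂μ := by
    rw [← lintegral_indicator hs (fun p : α × β => f p.1),
      Measure.lintegral_compProd
        ((show Measurable fun p : α × β => f p.1 from hf.comp measurable_fst).indicator hs)]
    refine lintegral_congr fun a => ?_
    have h1 : ∀ b, s.indicator (fun p : α × β => f p.1) (a, b)
        = f a * (Prod.mk a ⁻¹' s).indicator (1 : β → ℝ≥0∞) b := by
      intro b
      by_cases h : (a, b) ∈ s <;> simp [Set.indicator, h, Set.mem_preimage]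
    simp_rw [h1]
    rw [lintegral_const_mul _ (measurable_one.indicator (measurable_prodMk_left hs)),
      lintegral_indicator (measurable_prodMk_left hs)]
    simp
  rw [Measure.compProd_apply hs, withDensity_apply _ hs,
    lintegral_withDensity_eq_lintegral_mul μ hf (Kernel.measurable_kernel_prodMk_left hs),
    hrhs]
  rfl

lemma rnDeriv_compProd_left_ae {μ ν : Measure α} [IsFiniteMeasure μ] [IsFiniteMeasure ν]
    (hμν : μ ≪ ν) (κ : Kernel α β) [IsMarkovKernel κ] :
    (μ ⊗ₘ κ).rnDeriv (ν ⊗ₘ κ) =ᵐ[ν ⊗ₘ κ] fun p => μ.rnDeriv ν p.1 := by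
  have h1 : μ ⊗ₘ κ = (ν ⊗ₘ κ).withDensity (fun p => μ.rnDeriv ν p.1) := by
    rw [← withDensity_compProd_eq ν κ (Measure.measurable_rnDeriv μ ν),
      Measure.withDensity_rnDeriv_eq μ ν hμν]
  rw [h1]
  exact Measure.rnDeriv_withDensity _ ((Measure.measurable_rnDeriv μ ν).comp measurable_fst)

lemma lintegral_tsub_comm {μ : Measure α} {f g : α → ℝ≥0∞}
    (hf : Measurable f) (hg : Measurable g)
    (h : ∫⁻ x, f x ∂μ = ∫⁻ x, g x ∂μ) (hfin : ∫⁻ x, f x ∂μ ≠ ∞) :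
    ∫⁻ x, f x - g x ∂μ = ∫⁻ x, g x - f x ∂μ := by
  have key : ∀ (a b : ℝ≥0∞), (a - b) + min a b = a := by
    intro a b
    rcases le_total a b with h' | h'
    · simp [tsub_eq_zero_of_le h', min_eq_left h']
    · rw [min_eq_right h', tsub_add_cancel_of_le h']
  have hmin : ∫⁻ x, min (f x) (g x) ∂μ ≠ ∞ :=
    ne_top_of_le_ne_top hfin (lintegral_mono fun x => min_le_left _ _)
  have h1 : ∫⁻ x, f x - g x ∂μ + ∫⁻ x, min (f x) (g x) ∂μ = ∫⁻ x, f x ∂μ := by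
    rw [← lintegral_add_right _ (hf.min hg)]
    exact lintegral_congr fun x => key _ _
  have h2 : ∫⁻ x, g x - f x ∂μ + ∫⁻ x, min (f x) (g x) ∂μ = ∫⁻ x, g x ∂μ := by
    rw [← lintegral_add_right _ (hf.min hg)]
    refine lintegral_congr fun x => ?_
    rw [min_comm]
    exact key _ _
  have h3 := h1.trans (h.trans h2.symm)
  exact (ENNReal.add_left_inj hmin).mp h3

lemma lintegral_min_one_rnDeriv {γ : Type*} [MeasurableSpace γ] (ρ ρ' σ : Measure γ)
    [IsFiniteMeasure ρ] [IsFiniteMeasure ρ'] [IsFiniteMeasure σ]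
    (h1 : ρ' ≪ ρ) (h2 : ρ ≪ σ) :
    ∫⁻ z, min 1 (ρ'.rnDeriv ρ z) ∂ρ
      = ∫⁻ z, min (ρ.rnDeriv σ z) (ρ'.rnDeriv σ z) ∂σ := by
  have hmeas : Measurable fun z => min 1 (ρ'.rnDeriv ρ z) :=
    measurable_const.min (Measure.measurable_rnDeriv _ _)
  rw [← lintegral_rnDeriv_mul h2 hmeas.aemeasurable]
  have hmul := Measure.rnDeriv_mul_rnDeriv (κ := σ) h1
  refine lintegral_congr_ae ?_
  filter_upwards [hmul] with z hz
  simp only [Pi.mul_apply] at hz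
  have hdist : ρ.rnDeriv σ z * min 1 (ρ'.rnDeriv ρ z)
      = min (ρ.rnDeriv σ z) (ρ'.rnDeriv ρ z * ρ.rnDeriv σ z) := by
    rcases le_total (1 : ℝ≥0∞) (ρ'.rnDeriv ρ z) with h | h
    · rw [min_eq_left h, mul_one, min_eq_left]
      calc ρ.rnDeriv σ z = 1 * ρ.rnDeriv σ z := (one_mul _).symm
        _ ≤ ρ'.rnDeriv ρ z * ρ.rnDeriv σ z := mul_le_mul_left h _
    · rw [min_eq_right h, mul_comm, min_eq_right]
      calc ρ'.rnDeriv ρ z * ρ.rnDeriv σ z ≤ 1 * ρ.rnDeriv σ z := mul_le_mul_left h _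
        _ = ρ.rnDeriv σ z := one_mul _
  rw [hdist, hz]

/-- One-sided bound for the average acceptance rate. -/
lemma mh_one_sided {E : Type*} [MeasurableSpace E] (π πt : Measure E)
    [IsProbabilityMeasure π] [IsProbabilityMeasure πt]
    (P : Kernel E E) [IsMarkovKernel P]
    (hac : ((π ⊗ₘ P).map Prod.swap) ≪ (π ⊗ₘ P))
    (hact : ((πt ⊗ₘ P).map Prod.swap) ≪ (πt ⊗ₘ P)) :
    ∫⁻ p, mhAccept π P p ∂(π ⊗ₘ P)
      ≤ ∫⁻ p, mhAccept πt P p ∂(πt ⊗ₘ P)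
        + 2 * ∫⁻ x, π.rnDeriv (π + πt) x - πt.rnDeriv (π + πt) x ∂(π + πt) := by
  set μ : Measure E := π + πt with hμ
  set base : Measure (E × E) := μ ⊗ₘ P with hbase
  set σ : Measure (E × E) := base + base.map Prod.swap with hσ
  haveI : IsFiniteMeasure (base.map Prod.swap) := Measure.isFiniteMeasure_map base Prod.swap
  haveI : IsFiniteMeasure ((π ⊗ₘ P).map Prod.swap) :=
    Measure.isFiniteMeasure_map _ Prod.swap
  haveI : IsFiniteMeasure ((πt ⊗ₘ P).map Prod.swap) :=
    Measure.isFiniteMeasure_map _ Prod.swap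
  have hπμ : π ≪ μ := Measure.absolutelyContinuous_of_le (Measure.le_add_right le_rfl)
  have hπtμ : πt ≪ μ := Measure.absolutelyContinuous_of_le (Measure.le_add_left le_rfl)
  have hνb : π ⊗ₘ P ≪ base := Measure.AbsolutelyContinuous.compProd_left hπμ P
  have hνtb : πt ⊗ₘ P ≪ base := Measure.AbsolutelyContinuous.compProd_left hπtμ P
  have hbσ : base ≪ σ := Measure.absolutelyContinuous_of_le (Measure.le_add_right le_rfl)
  have hsσ : base.map Prod.swap ≪ σ :=
    Measure.absolutelyContinuous_of_le (Measure.le_add_left le_rfl)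
  have hνσ : π ⊗ₘ P ≪ σ := hνb.trans hbσ
  have hνtσ : πt ⊗ₘ P ≪ σ := hνtb.trans hbσ
  set a := (π ⊗ₘ P).rnDeriv σ with ha_def
  set b := ((π ⊗ₘ P).map Prod.swap).rnDeriv σ with hb_def
  set c := (πt ⊗ₘ P).rnDeriv σ with hc_def
  set d := ((πt ⊗ₘ P).map Prod.swap).rnDeriv σ with hd_def
  have ha_meas : Measurable a := Measure.measurable_rnDeriv _ _
  have hb_meas : Measurable b := Measure.measurable_rnDeriv _ _
  have hc_meas : Measurable c := Measure.measurable_rnDeriv _ _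
  have hd_meas : Measurable d := Measure.measurable_rnDeriv _ _
  have hA : ∫⁻ p, mhAccept π P p ∂(π ⊗ₘ P) = ∫⁻ z, min (a z) (b z) ∂σ :=
    lintegral_min_one_rnDeriv _ _ _ hac hνσ
  have hAt : ∫⁻ p, mhAccept πt P p ∂(πt ⊗ₘ P) = ∫⁻ z, min (c z) (d z) ∂σ :=
    lintegral_min_one_rnDeriv _ _ _ hact hνtσ
  -- the first difference term
  have hT : ∫⁻ z, a z - c z ∂σ
      = ∫⁻ x, π.rnDeriv μ x - πt.rnDeriv μ x ∂μ := by
    have hx : (π ⊗ₘ P).rnDeriv base =ᵐ[base] fun p => π.rnDeriv μ p.1 :=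
      rnDeriv_compProd_left_ae hπμ P
    have hy : (πt ⊗ₘ P).rnDeriv base =ᵐ[base] fun p => πt.rnDeriv μ p.1 :=
      rnDeriv_compProd_left_ae hπtμ P
    have ha2 := Measure.rnDeriv_mul_rnDeriv (κ := σ) hνb
    have hc2 := Measure.rnDeriv_mul_rnDeriv (κ := σ) hνtb
    have hw : ∀ᵐ z ∂σ, base.rnDeriv σ z ≠ ∞ := Measure.rnDeriv_ne_top _ _
    have he : (fun z => a z - c z) =ᵐ[σ]
        fun z => base.rnDeriv σ z
          * ((π ⊗ₘ P).rnDeriv base z - (πt ⊗ₘ P).rnDeriv base z) := by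
      filter_upwards [ha2, hc2, hw] with z h1 h2 h3
      simp only [Pi.mul_apply] at h1 h2
      rw [ha_def, hc_def, ← h1, ← h2, ← ENNReal.sub_mul (fun _ _ => h3)]
      exact mul_comm _ _
    rw [lintegral_congr_ae he,
      lintegral_rnDeriv_mul hbσ
        (show Measurable fun z => (π ⊗ₘ P).rnDeriv base z - (πt ⊗ₘ P).rnDeriv base z from
          (Measure.measurable_rnDeriv _ _).sub (Measure.measurable_rnDeriv _ _)).aemeasurable]
    have he2 : (fun p => (π ⊗ₘ P).rnDeriv base p - (πt ⊗ₘ P).rnDeriv base p) =ᵐ[base]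
        fun p => π.rnDeriv μ p.1 - πt.rnDeriv μ p.1 := by
      filter_upwards [hx, hy] with p h1 h2
      rw [h1, h2]
    rw [lintegral_congr_ae he2, hbase,
      Measure.lintegral_compProd
        (show Measurable fun p : E × E => π.rnDeriv μ p.1 - πt.rnDeriv μ p.1 from
          ((Measure.measurable_rnDeriv _ _).comp measurable_fst).sub
            ((Measure.measurable_rnDeriv _ _).comp measurable_fst))]
    refine lintegral_congr fun x => ?_
    simp
  -- the swapped difference term equals the first one
  have hσswap : σ.map Prod.swap = σ := by
    rw [hσ, Measure.map_add _ _ measurable_swap,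
      Measure.map_map measurable_swap measurable_swap, Prod.swap_swap_eq, Measure.map_id,
      add_comm]
  have hemb : MeasurableEmbedding (Prod.swap : E × E → E × E) :=
    (MeasurableEquiv.prodComm : (E × E) ≃ᵐ (E × E)).measurableEmbedding
  have hS : ∫⁻ z, b z - d z ∂σ = ∫⁻ z, a z - c z ∂σ := by
    have hb2 := hemb.rnDeriv_map (π ⊗ₘ P) σ
    have hd2 := hemb.rnDeriv_map (πt ⊗ₘ P) σ
    rw [hσswap] at hb2 hd2
    calc ∫⁻ z, b z - d z ∂σ
        = ∫⁻ z, b (Prod.swap z) - d (Prod.swap z) ∂σ := by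
          conv_lhs => rw [← hσswap]
          rw [lintegral_map (show Measurable fun z => b z - d z from hb_meas.sub hd_meas) measurable_swap]
      _ = ∫⁻ z, a z - c z ∂σ := by
          refine lintegral_congr_ae ?_
          filter_upwards [hb2, hd2] with z h1 h2
          rw [ha_def, hb_def, hc_def, hd_def, h1, h2]
  -- pointwise bound and conclusion
  have hptwise : ∀ z, min (a z) (b z)
      ≤ min (c z) (d z) + ((a z - c z) + (b z - d z)) := by
    intro z
    have hre : min (c z) (d z) + ((a z - c z) + (b z - d z))
        = min (c z + ((a z - c z) + (b z - d z))) (d z + ((a z - c z) + (b z - d z))) :=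
      (min_add_add_right _ _ _).symm
    rw [hre]
    refine le_min ?_ ?_
    · exact (min_le_left _ _).trans (le_add_tsub.trans (add_le_add_right le_self_add _))
    · exact (min_le_right _ _).trans (le_add_tsub.trans (add_le_add_right le_add_self _))
  calc ∫⁻ p, mhAccept π P p ∂(π ⊗ₘ P) = ∫⁻ z, min (a z) (b z) ∂σ := hA
    _ ≤ ∫⁻ z, min (c z) (d z) + ((a z - c z) + (b z - d z)) ∂σ :=
        lintegral_mono hptwise
    _ = ∫⁻ z, min (c z) (d z) ∂σ + (∫⁻ z, a z - c z ∂σ + ∫⁻ z, b z - d z ∂σ) := by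
        rw [lintegral_add_left (hc_meas.min hd_meas),
          lintegral_add_left (show Measurable fun z => a z - c z from ha_meas.sub hc_meas)]
    _ = ∫⁻ p, mhAccept πt P p ∂(πt ⊗ₘ P)
        + 2 * ∫⁻ x, π.rnDeriv μ x - πt.rnDeriv μ x ∂μ := by
        rw [hS, hT, ← hAt, two_mul]

end Aux

/-- If `K` and `K̃` are the Metropolis–Hastings kernels targeting `π` resp.
`π̃` with the same proposal kernel `P` (both acceptance probabilities being well-defined), then
the average acceptance rates satisfy `|ᾱ(K) − ᾱ(K̃)| ≤ 2 d_TV(π, π̃)`. -/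
theorem avg_acceptance_stability
    {d : ℕ} (π πt : Measure (Fin d → ℝ)) [IsProbabilityMeasure π] [IsProbabilityMeasure πt]
    (P : Kernel (Fin d → ℝ) (Fin d → ℝ)) [IsMarkovKernel P]
    (hac : ((π ⊗ₘ P).map Prod.swap) ≪ (π ⊗ₘ P))
    (hact : ((πt ⊗ₘ P).map Prod.swap) ≪ (πt ⊗ₘ P)) :
    |(∫⁻ p, mhAccept π P p ∂(π ⊗ₘ P)).toReal
        - (∫⁻ p, mhAccept πt P p ∂(πt ⊗ₘ P)).toReal|
      ≤ 2 * tvDist π πt := by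
  set μ := π + πt with hμ
  have hπμ : π ≪ μ := Measure.absolutelyContinuous_of_le (Measure.le_add_right le_rfl)
  have hπtμ : πt ≪ μ := Measure.absolutelyContinuous_of_le (Measure.le_add_left le_rfl)
  set D : ℝ≥0∞ := ∫⁻ x, π.rnDeriv μ x - πt.rnDeriv μ x ∂μ with hD
  set D' : ℝ≥0∞ := ∫⁻ x, πt.rnDeriv μ x - π.rnDeriv μ x ∂μ with hD'
  have hintp : ∫⁻ x, π.rnDeriv μ x ∂μ = 1 := by
    haveI := Measure.haveLebesgueDecomposition_of_finiteMeasure (μ := π) (ν := μ)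
    rw [Measure.lintegral_rnDeriv hπμ]; simp
  have hintpt : ∫⁻ x, πt.rnDeriv μ x ∂μ = 1 := by
    haveI := Measure.haveLebesgueDecomposition_of_finiteMeasure (μ := πt) (ν := μ)
    rw [Measure.lintegral_rnDeriv hπtμ]; simp
  have hDD' : D = D' :=
    lintegral_tsub_comm (Measure.measurable_rnDeriv _ _) (Measure.measurable_rnDeriv _ _)
      (hintp.trans hintpt.symm) (by rw [hintp]; exact ENNReal.one_ne_top)
  have hDle : D ≤ 1 := by
    rw [hD, ← hintp]; exact lintegral_mono fun x => tsub_le_self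
  have hDne : D ≠ ∞ := (hDle.trans_lt ENNReal.one_lt_top).ne
  -- tvDist = D.toReal
  have hae : (fun x => |(π.rnDeriv μ x).toReal - (πt.rnDeriv μ x).toReal|) =ᵐ[μ]
      fun x => ((π.rnDeriv μ x - πt.rnDeriv μ x) + (πt.rnDeriv μ x - π.rnDeriv μ x)).toReal := by
    filter_upwards [Measure.rnDeriv_ne_top π μ, Measure.rnDeriv_ne_top πt μ] with x h1 h2
    rcases le_total (π.rnDeriv μ x) (πt.rnDeriv μ x) with h | h
    · rw [tsub_eq_zero_of_le h, zero_add, ENNReal.toReal_sub_of_le h h2,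
        abs_of_nonpos (sub_nonpos.mpr ((ENNReal.toReal_le_toReal h1 h2).mpr h))]
      ring
    · rw [tsub_eq_zero_of_le h, add_zero, ENNReal.toReal_sub_of_le h h1,
        abs_of_nonneg (sub_nonneg.mpr ((ENNReal.toReal_le_toReal h2 h1).mpr h))]
  have hmeas2 : AEMeasurable (fun x =>
      (π.rnDeriv μ x - πt.rnDeriv μ x) + (πt.rnDeriv μ x - π.rnDeriv μ x)) μ :=
    (((Measure.measurable_rnDeriv _ _).sub (Measure.measurable_rnDeriv _ _)).add
      ((Measure.measurable_rnDeriv _ _).sub (Measure.measurable_rnDeriv _ _))).aemeasurable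
  have hfin2 : ∀ᵐ x ∂μ,
      (π.rnDeriv μ x - πt.rnDeriv μ x) + (πt.rnDeriv μ x - π.rnDeriv μ x) < ∞ := by
    filter_upwards [Measure.rnDeriv_ne_top π μ, Measure.rnDeriv_ne_top πt μ] with x h1 h2
    exact ENNReal.add_lt_top.mpr ⟨tsub_le_self.trans_lt h1.lt_top,
      tsub_le_self.trans_lt h2.lt_top⟩
  have hint_eq : ∫ x, |(π.rnDeriv μ x).toReal - (πt.rnDeriv μ x).toReal| ∂μ
      = (∫⁻ x, ((π.rnDeriv μ x - πt.rnDeriv μ x) + (πt.rnDeriv μ x - π.rnDeriv μ x)) ∂μ).toReal := by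
    rw [integral_congr_ae hae, integral_toReal hmeas2 hfin2]
  have htv : tvDist π πt = D.toReal := by
    unfold tvDist
    rw [← hμ, hint_eq,
      lintegral_add_left (show Measurable fun x => π.rnDeriv μ x - πt.rnDeriv μ x from
        (Measure.measurable_rnDeriv _ _).sub (Measure.measurable_rnDeriv _ _)),
      ← hD, ← hD', ← hDD', ← two_mul, ENNReal.toReal_mul, ENNReal.toReal_ofNat]
    ring
  have h1 := mh_one_sided π πt P hac hact
  have h2 := mh_one_sided πt π P hact hac
  rw [add_comm πt π, ← hμ] at h2
  rw [← hμ] at h1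
  have hAle : ∫⁻ p, mhAccept π P p ∂(π ⊗ₘ P) ≤ 1 := by
    calc ∫⁻ p, mhAccept π P p ∂(π ⊗ₘ P) ≤ ∫⁻ _, 1 ∂(π ⊗ₘ P) :=
          lintegral_mono fun p => min_le_left _ _
      _ = 1 := by simp
  have hAtle : ∫⁻ p, mhAccept πt P p ∂(πt ⊗ₘ P) ≤ 1 := by
    calc ∫⁻ p, mhAccept πt P p ∂(πt ⊗ₘ P) ≤ ∫⁻ _, 1 ∂(πt ⊗ₘ P) :=
          lintegral_mono fun p => min_le_left _ _
      _ = 1 := by simp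
  have hAne : ∫⁻ p, mhAccept π P p ∂(π ⊗ₘ P) ≠ ∞ := (hAle.trans_lt ENNReal.one_lt_top).ne
  have hAtne : ∫⁻ p, mhAccept πt P p ∂(πt ⊗ₘ P) ≠ ∞ := (hAtle.trans_lt ENNReal.one_lt_top).ne
  rw [htv, abs_sub_le_iff]
  have h2D : (2 * D).toReal = 2 * D.toReal := by
    rw [ENNReal.toReal_mul, ENNReal.toReal_ofNat]
  constructor
  · have hmono := ENNReal.toReal_mono (by
      exact ENNReal.add_ne_top.mpr ⟨hAtne, ENNReal.mul_ne_top (by simp) hDne⟩) h1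
    rw [ENNReal.toReal_add hAtne (ENNReal.mul_ne_top (by simp) hDne), h2D] at hmono
    linarith
  · rw [← hD', ← hDD'] at h2
    have hmono := ENNReal.toReal_mono (by
      exact ENNReal.add_ne_top.mpr ⟨hAne, ENNReal.mul_ne_top (by simp) hDne⟩) h2
    rw [ENNReal.toReal_add hAne (ENNReal.mul_ne_top (by simp) hDne), h2D] at hmono
    linarith
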